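/- arXiv:1810.12361 — 3 statements merged into one kernel-verified Lean document; each statement's English description precedes it below -/
import Mathlib

section
/- Let $f(x) = \langle x - b, A(x-b) \rangle$ for a positive semidefinite matrix $A \in \mathbb{R}^{d \times d}$ (with $A$ positive definite so densities normalize) and $b \in \mathbb{R}^d$, and let $p_{\gamma,1/k}(x) \propto \exp(-\gamma f(x)^{1/k})$ for a positive integer $k$ and $\gamma > 0$. Then $\mathbb{E}_{x \sim p_{\gamma,1/k}}[f(x)] - \min_x f(x) \leq \left(\frac{k(1 + d/2) - 1}{\gamma}\right)^k$. -/
open MeasureTheory Matrix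
open scoped MatrixOrder

private lemma my_gamma_add_nat (s : ℝ) (hs : 0 < s) : ∀ k : ℕ,
    Real.Gamma (s + k) = Real.Gamma s * ∏ i ∈ Finset.range k, (s + i)
  | 0 => by simp
  | (k + 1) => by
    have h : s + (k:ℝ) ≠ 0 := by positivity
    rw [Nat.cast_add, Nat.cast_one, ← add_assoc, Real.Gamma_add_one h,
      my_gamma_add_nat s hs k, Finset.prod_range_succ]
    ring

private lemma my_oneD (k : ℕ) (hk : 1 ≤ k) (γ : ℝ) (hγ : 0 < γ) (n : ℕ) :
    ∫ r in Set.Ioi (0:ℝ), r ^ n * Real.exp (-γ * (r ^ 2) ^ ((1:ℝ)/k)) =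
      γ ^ (-(((n:ℝ)+1) * k / 2)) * ((k:ℝ) / 2) * Real.Gamma (((n:ℝ)+1) * k / 2) := by
  have hk0 : (0:ℝ) < k := by exact_mod_cast hk
  have h2k : (0:ℝ) < 2 / k := by positivity
  have hq : (-1:ℝ) < (n:ℝ) := lt_of_lt_of_le (by norm_num) (Nat.cast_nonneg n)
  have h1 : ∫ r in Set.Ioi (0:ℝ), r ^ n * Real.exp (-γ * (r ^ 2) ^ ((1:ℝ)/k)) =
      ∫ r in Set.Ioi (0:ℝ), r ^ (n:ℝ) * Real.exp (-γ * r ^ ((2:ℝ)/k)) := by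
    refine setIntegral_congr_fun measurableSet_Ioi (fun r hr => ?_)
    have hr' : (0:ℝ) < r := hr
    have hx : (r ^ 2 : ℝ) ^ ((1:ℝ)/k) = r ^ ((2:ℝ)/k) := by
      rw [← Real.rpow_natCast r 2, ← Real.rpow_mul hr'.le]
      rw [show ((2:ℕ):ℝ) * ((1:ℝ)/k) = (2:ℝ)/k by push_cast; ring]
    rw [hx, ← Real.rpow_natCast r n]
  rw [h1, integral_rpow_mul_exp_neg_mul_rpow h2k hq hγ]
  have e1 : -((n:ℝ) + 1) / (2 / k) = -(((n:ℝ)+1) * k / 2) := by field_simp; try ring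
  have e2 : (1:ℝ) / (2 / k) = (k:ℝ)/2 := by field_simp; try ring
  have e3 : ((n:ℝ) + 1) / (2 / k) = ((n:ℝ)+1) * k / 2 := by field_simp; try ring
  rw [e1, e2, e3]

private lemma my_aux_integral (d : ℕ) (hd : 1 ≤ d) (A : Matrix (Fin d) (Fin d) ℝ)
    (hA : A.PosDef) (b : Fin d → ℝ) (G : ℝ → ℝ) :
    ∫ x : Fin d → ℝ, G ((x - b) ⬝ᵥ A.mulVec (x - b)) =
      (|(CFC.sqrt A).det|⁻¹ *
        ((d : ℝ) * (volume (Metric.ball (0 : EuclideanSpace ℝ (Fin d)) 1)).toReal)) *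
        ∫ r in Set.Ioi (0 : ℝ), r ^ (d - 1) * G (r ^ 2) := by
  haveI : Nonempty (Fin d) := ⟨⟨0, hd⟩⟩
  haveI : Nontrivial (EuclideanSpace ℝ (Fin d)) := by
    infer_instance
  set B := CFC.sqrt A with hB
  have hBB : B * B = A := CFC.sqrt_mul_sqrt_self A hA.posSemidef.nonneg
  have hBdet : B.det ≠ 0 := by
    intro h
    have : A.det = 0 := by rw [← hBB, Matrix.det_mul, h, mul_zero]
    exact hA.det_pos.ne' this
  have hBsymm : Bᵀ = B := by
    have := (Matrix.nonneg_iff_posSemidef.mp (CFC.sqrt_nonneg A)).isHermitian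
    simpa [Matrix.IsHermitian, Matrix.conjTranspose_eq_transpose_of_trivial] using this
  have key1 : ∀ v : Fin d → ℝ, v ⬝ᵥ A.mulVec v = (B.mulVec v) ⬝ᵥ (B.mulVec v) := by
    intro v
    rw [← hBB, ← Matrix.mulVec_mulVec, Matrix.dotProduct_mulVec v B,
      ← Matrix.mulVec_transpose, hBsymm]
  -- translation
  have step1 : ∫ x : Fin d → ℝ, G ((x - b) ⬝ᵥ A.mulVec (x - b)) =
      ∫ x : Fin d → ℝ, G (x ⬝ᵥ A.mulVec x) :=
    integral_sub_right_eq_self (fun x => G (x ⬝ᵥ A.mulVec x)) b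
  -- linear change of variables
  set L : (Fin d → ℝ) →ₗ[ℝ] (Fin d → ℝ) := Matrix.toLin' B with hL
  have hLdet : LinearMap.det L ≠ 0 := by rwa [hL, LinearMap.det_toLin']
  let eL : (Fin d → ℝ) ≃ᵐ (Fin d → ℝ) :=
    (LinearMap.equivOfDetNeZero L hLdet).toContinuousLinearEquiv.toHomeomorph.toMeasurableEquiv
  have heL : ∀ v, eL v = B.mulVec v := fun v => rfl
  have hmap : Measure.map eL (volume : Measure (Fin d → ℝ)) =
      ENNReal.ofReal |(LinearMap.det L)⁻¹| • volume := by
    have := Measure.map_linearMap_addHaar_eq_smul_addHaar (volume : Measure (Fin d → ℝ)) hLdet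
    rw [← this]
    rfl
  have step2 : ∫ x : Fin d → ℝ, G (x ⬝ᵥ A.mulVec x) =
      |B.det|⁻¹ * ∫ w : Fin d → ℝ, G (w ⬝ᵥ w) := by
    have h1 : ∫ x : Fin d → ℝ, G (x ⬝ᵥ A.mulVec x) =
        ∫ x : Fin d → ℝ, G ((eL x) ⬝ᵥ (eL x)) := by
      refine integral_congr_ae (Filter.Eventually.of_forall fun x => ?_)
      show G (x ⬝ᵥ A.mulVec x) = G ((eL x) ⬝ᵥ (eL x))
      rw [heL, key1]
    rw [h1, ← MeasureTheory.integral_map_equiv eL (fun w => G (w ⬝ᵥ w)), hmap,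
      integral_smul_measure, ENNReal.toReal_ofReal (abs_nonneg _), smul_eq_mul,
      abs_inv, hL, LinearMap.det_toLin']
  -- Euclidean transfer
  have step3 : ∫ w : Fin d → ℝ, G (w ⬝ᵥ w) =
      ∫ y : EuclideanSpace ℝ (Fin d), G (‖y‖ ^ 2) := by
    rw [← (EuclideanSpace.volume_preserving_symm_measurableEquiv_toLp (Fin d)).integral_comp
      (MeasurableEquiv.toLp 2 (Fin d → ℝ)).symm.measurableEmbedding (fun w => G (w ⬝ᵥ w))]
    refine integral_congr_ae (Filter.Eventually.of_forall fun y => ?_)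
    show G ((MeasurableEquiv.toLp 2 (Fin d → ℝ)).symm y ⬝ᵥ
      (MeasurableEquiv.toLp 2 (Fin d → ℝ)).symm y) = G (‖y‖ ^ 2)
    congr 1
    rw [EuclideanSpace.norm_eq, Real.sq_sqrt (by positivity)]
    simp [dotProduct, MeasurableEquiv.coe_toLp_symm, Real.norm_eq_abs, sq_abs, sq]
  -- polar coordinates
  have step4 : ∫ y : EuclideanSpace ℝ (Fin d), G (‖y‖ ^ 2) =
      (d : ℝ) * ((volume (Metric.ball (0 : EuclideanSpace ℝ (Fin d)) 1)).toReal *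
        ∫ r in Set.Ioi (0 : ℝ), r ^ (d - 1) * G (r ^ 2)) := by
    have := MeasureTheory.integral_fun_norm_addHaar
      (volume : Measure (EuclideanSpace ℝ (Fin d))) (fun r => G (r ^ 2))
    rw [this, finrank_euclideanSpace_fin]
    simp [nsmul_eq_mul, smul_eq_mul, mul_assoc, measureReal_def]
  rw [step1, step2, step3, step4]
  ring

theorem stmt_7 (d k : ℕ) (hd : 1 ≤ d) (hk : 1 ≤ k) (γ : ℝ) (hγ : 0 < γ)
    (A : Matrix (Fin d) (Fin d) ℝ) (hA : A.PosDef) (b : Fin d → ℝ)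
    (f : (Fin d → ℝ) → ℝ) (hf : ∀ x, f x = (x - b) ⬝ᵥ A.mulVec (x - b)) :
    (∫ x : Fin d → ℝ, f x * Real.exp (-γ * (f x) ^ ((1 : ℝ) / k))) /
        (∫ x : Fin d → ℝ, Real.exp (-γ * (f x) ^ ((1 : ℝ) / k))) -
      (⨅ x, f x) ≤ (((k : ℝ) * (1 + (d : ℝ) / 2) - 1) / γ) ^ k := by
  have hk0 : (0:ℝ) < k := by exact_mod_cast hk
  have hd0 : (0:ℝ) < d := by exact_mod_cast hd
  -- infimum is 0
  have hf0 : ∀ x, 0 ≤ f x := fun x => by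
    rw [hf]
    simpa using hA.posSemidef.dotProduct_mulVec_nonneg (x - b)
  have hinf : (⨅ x, f x) = 0 := by
    refine le_antisymm ?_ (le_ciInf hf0)
    have : f b = 0 := by simp [hf]
    calc (⨅ x, f x) ≤ f b := ciInf_le ⟨0, by rintro _ ⟨x, rfl⟩; exact hf0 x⟩ b
    _ = 0 := this
  rw [hinf, sub_zero]
  simp_rw [hf]
  rw [my_aux_integral d hd A hA b (fun t => t * Real.exp (-γ * t ^ ((1:ℝ)/k))),
    my_aux_integral d hd A hA b (fun t => Real.exp (-γ * t ^ ((1:ℝ)/k)))]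
  set C : ℝ := |(CFC.sqrt A).det|⁻¹ *
    ((d : ℝ) * (volume (Metric.ball (0 : EuclideanSpace ℝ (Fin d)) 1)).toReal) with hC
  have hCpos : 0 < C := by
    have h1 : (CFC.sqrt A).det ≠ 0 := by
      intro h
      have hBB : CFC.sqrt A * CFC.sqrt A = A := CFC.sqrt_mul_sqrt_self A hA.posSemidef.nonneg
      have : A.det = 0 := by rw [← hBB, Matrix.det_mul, h, mul_zero]
      exact hA.det_pos.ne' this
    have h2 : (0:ℝ) < (volume (Metric.ball (0 : EuclideanSpace ℝ (Fin d)) 1)).toReal := by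
      refine ENNReal.toReal_pos ?_ ?_
      · exact (Metric.measure_ball_pos volume 0 one_pos).ne'
      · exact measure_ball_lt_top.ne
    have h3 : (0:ℝ) < |(CFC.sqrt A).det|⁻¹ := by positivity
    positivity
  -- evaluate 1D integrals
  have hnum : ∫ r in Set.Ioi (0:ℝ), r ^ (d - 1) *
      (r ^ 2 * Real.exp (-γ * (r ^ 2) ^ ((1:ℝ)/k))) =
      ∫ r in Set.Ioi (0:ℝ), r ^ (d + 1) * Real.exp (-γ * (r ^ 2) ^ ((1:ℝ)/k)) := by
    refine setIntegral_congr_fun measurableSet_Ioi (fun r _ => ?_)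
    have : d - 1 + 2 = d + 1 := by omega
    rw [← this, pow_add]
    ring
  rw [hnum, my_oneD k hk γ hγ (d + 1), my_oneD k hk γ hγ (d - 1)]
  have hcast1 : ((d + 1 : ℕ) : ℝ) + 1 = (d:ℝ) + 2 := by push_cast; ring
  have hcast2 : ((d - 1 : ℕ) : ℝ) + 1 = (d:ℝ) := by
    have : ((d - 1 : ℕ) : ℝ) = (d:ℝ) - 1 := by
      rw [Nat.cast_sub hd]; norm_num
    rw [this]; ring
  rw [hcast1, hcast2]
  set s : ℝ := (d:ℝ) * k / 2 with hs
  have hspos : 0 < s := by positivity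
  have hexp : ((d:ℝ) + 2) * k / 2 = s + k := by rw [hs]; ring
  rw [hexp]
  have hGs : 0 < Real.Gamma s := Real.Gamma_pos_of_pos hspos
  set P : ℝ := ∏ i ∈ Finset.range k, (s + i) with hP
  have hPpos : 0 < P := Finset.prod_pos (fun i _ => by positivity)
  have hGsk : Real.Gamma (s + k) = Real.Gamma s * P := my_gamma_add_nat s hspos k
  have hrpow : γ ^ (-(s + (k:ℝ))) = γ ^ (-s) * (γ ^ k)⁻¹ := by
    rw [neg_add, Real.rpow_add hγ, Real.rpow_neg hγ.le (k:ℝ), Real.rpow_natCast]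
  have hlhs : C * (γ ^ (-(s + (k:ℝ))) * ((k:ℝ)/2) * Real.Gamma (s + k)) /
      (C * (γ ^ (-s) * ((k:ℝ)/2) * Real.Gamma s)) = (γ ^ k)⁻¹ * P := by
    rw [mul_div_mul_left _ _ hCpos.ne', hGsk, hrpow]
    have hne1 : γ ^ (-s) ≠ 0 := (Real.rpow_pos_of_pos hγ _).ne'
    have hne2 : ((k:ℝ)/2) ≠ 0 := by positivity
    field_simp
  rw [hlhs]
  -- final bound
  have hbound : P ≤ (s + k - 1) ^ k := by
    have h1 : P ≤ ∏ _i ∈ Finset.range k, (s + (k:ℝ) - 1) := by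
      refine Finset.prod_le_prod (fun i _ => by positivity) (fun i hi => ?_)
      have hik : i < k := Finset.mem_range.mp hi
      have : (i:ℝ) ≤ (k:ℝ) - 1 := by
        have : (i:ℝ) + 1 ≤ (k:ℝ) := by exact_mod_cast hik
        linarith
      linarith
    rwa [Finset.prod_const, Finset.card_range] at h1
  have hrhs : (((k : ℝ) * (1 + (d : ℝ) / 2) - 1) / γ) ^ k = (γ ^ k)⁻¹ * (s + k - 1) ^ k := by
    rw [div_pow, hs]
    rw [div_eq_mul_inv, mul_comm]
    congr 2
    ring
  rw [hrhs]
  have hγk : (0:ℝ) < (γ ^ k)⁻¹ := by positivity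
  exact mul_le_mul_of_nonneg_left hbound hγk.le
end

section
/- Suppose the generator $\mathcal{A}$ of a diffusion with drift $b$ and diffusion coefficient $\sigma$ satisfies the dissipativity condition $\mathcal{A}\|x\|_2^2 = 2\langle b(x), x\rangle + \|\sigma(x)\|_F^2 \leq -\alpha\|x\|_2^2 + \beta$ with $\alpha, \beta > 0$, and the growth condition $\|\sigma(x)\sigma(x)^\top\|_{op} \leq \frac{\lambda_a}{4}(1+\|x\|_2)$ (the case $r=1$). Then for every integer $n \geq 3$, $\mathcal{A}\|x\|_2^n \leq -\alpha\|x\|_2^n + \beta_{1,n}$ where $\beta_{1,n} = \beta + \frac{n\lambda_a}{8} + \frac{\alpha}{2}\left(\frac{n\lambda_a + 6\beta}{2\alpha}\right)^n$. -/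
open MeasureTheory Matrix RealInnerProductSpace

section Helpers
open Real Asymptotics Topology

theorem hasFDerivAt_norm_rpow_ne' {E : Type*} [NormedAddCommGroup E]
    [InnerProductSpace ℝ E] {x : E} (hx : x ≠ 0) (q : ℝ) :
    HasFDerivAt (fun y : E ↦ ‖y‖ ^ q) ((q * ‖x‖ ^ (q - 2)) • innerSL ℝ x) x := by
  apply HasStrictFDerivAt.hasFDerivAt
  convert (hasStrictFDerivAt_norm_sq x).rpow_const (p := q / 2) (by simp [hx]) using 0
  simp_rw [← Real.rpow_natCast_mul (norm_nonneg _), ← Nat.cast_smul_eq_nsmul ℝ, smul_smul]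
  ring_nf

theorem hasFDerivAt_norm_pow'' {d : ℕ} (n : ℕ) (hn : 2 ≤ n) (y : EuclideanSpace ℝ (Fin d)) :
    HasFDerivAt (fun z : EuclideanSpace ℝ (Fin d) ↦ ‖z‖ ^ n)
      (((n : ℝ) * ‖y‖ ^ ((n : ℝ) - 2)) • innerSL ℝ y) y := by
  have h1 : (1 : ℝ) < (n : ℝ) := by exact_mod_cast hn
  have h := hasFDerivAt_norm_rpow (E := EuclideanSpace ℝ (Fin d)) y h1
  have he : (fun z : EuclideanSpace ℝ (Fin d) ↦ ‖z‖ ^ (n : ℝ))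
      = fun z : EuclideanSpace ℝ (Fin d) ↦ ‖z‖ ^ n :=
    funext fun z => Real.rpow_natCast _ n
  rwa [he] at h

theorem fderiv_norm_pow_apply' {d : ℕ} (n : ℕ) (hn : 2 ≤ n) (y : EuclideanSpace ℝ (Fin d))
    (j : Fin d) :
    fderiv ℝ (fun z : EuclideanSpace ℝ (Fin d) ↦ ‖z‖ ^ n) y (EuclideanSpace.single j 1)
      = (n : ℝ) * ‖y‖ ^ ((n:ℝ) - 2) * y j := by
  rw [(hasFDerivAt_norm_pow'' n hn y).fderiv]
  simp [EuclideanSpace.inner_single_right, mul_assoc]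

theorem hasFDerivAt_G_ne' {d : ℕ} (n : ℕ) {x : EuclideanSpace ℝ (Fin d)} (hx : x ≠ 0)
    (j : Fin d) :
    HasFDerivAt (fun y : EuclideanSpace ℝ (Fin d) ↦ (n : ℝ) * ‖y‖ ^ ((n:ℝ) - 2) * y j)
      ((n : ℝ) • ((‖x‖ ^ ((n:ℝ)-2)) • (EuclideanSpace.proj j)
        + (x j * (((n:ℝ)-2) * ‖x‖ ^ ((n:ℝ)-2-2))) • innerSL ℝ x)) x := by
  have h1 := hasFDerivAt_norm_rpow_ne' hx ((n:ℝ) - 2)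
  have h2 : HasFDerivAt (fun y : EuclideanSpace ℝ (Fin d) ↦ y j)
      (EuclideanSpace.proj (𝕜 := ℝ) j) x := (EuclideanSpace.proj (𝕜 := ℝ) j).hasFDerivAt
  have h3 := (h1.mul h2).const_mul ((n:ℝ))
  refine HasFDerivAt.congr_of_eventuallyEq (h3.congr_fderiv ?_) (Filter.Eventually.of_forall fun y => ?_)
  · ext v; simp; left; ring
  · simp only [Pi.mul_apply]; ring

theorem hasFDerivAt_zero_mul_clm' {E : Type*} [NormedAddCommGroup E]
    [InnerProductSpace ℝ E] (φ : E → ℝ) (hφ : ContinuousAt φ 0) (hφ0 : φ 0 = 0)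
    (L : E →L[ℝ] ℝ) : HasFDerivAt (fun y : E ↦ φ y * L y) (0 : E →L[ℝ] ℝ) 0 := by
  rw [HasFDerivAt, hasFDerivAtFilter_iff_isLittleO]
  have h1 : (fun y : E ↦ φ y) =o[𝓝 0] (fun _ ↦ (1 : ℝ)) := by
    rw [isLittleO_one_iff]
    simpa [hφ0] using hφ.tendsto
  have h2 : (fun y : E ↦ L y) =O[𝓝 0] (fun y : E ↦ ‖y‖) := by
    simpa using (L.isBigO_id ⊤ |>.mono le_top).norm_right
  have h3 := h1.mul_isBigO h2
  have h4 : (fun y : E ↦ (1:ℝ) * ‖y‖) =O[𝓝 0] (fun y : E ↦ y - 0) := by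
    simpa [isBigO_norm_left (f' := fun y : E ↦ y)] using (isBigO_refl (fun y : E ↦ y) (𝓝 0))
  simpa [hφ0, Function.comp_def] using h3.trans_isBigO h4

theorem young_master' (k : ℕ) {x y : ℝ} (hx : 0 ≤ x) (hy : 0 ≤ y) :
    (k + 1 : ℝ) * x ^ k * y ≤ (k : ℝ) * x ^ (k + 1) + y ^ (k + 1) := by
  rcases eq_or_lt_of_le hx with h0 | hx'
  · rcases Nat.eq_zero_or_pos k with rfl | hk
    · simp
    · rw [← h0, zero_pow hk.ne', zero_pow (Nat.succ_ne_zero k)]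
      simpa using pow_nonneg hy (k+1)
  · have ha : (-2 : ℝ) ≤ y / x - 1 := by
      have : 0 ≤ y / x := div_nonneg hy hx'.le
      linarith
    have h := one_add_mul_le_pow ha (k + 1)
    have hxp : (0:ℝ) < x ^ (k+1) := pow_pos hx' _
    have h2 := mul_le_mul_of_nonneg_left h hxp.le
    rw [show (1 + (y / x - 1)) = y / x by ring, div_pow,
      mul_div_cancel₀ _ hxp.ne'] at h2
    have e2 : x ^ (k+1) * (1 + (↑(k+1):ℝ) * (y / x - 1))
        = x^(k+1) + (↑(k+1):ℝ) * x^k * y - (↑(k+1):ℝ) * x^(k+1) := by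
      field_simp; ring
    rw [e2] at h2
    push_cast at h2
    nlinarith [h2]

theorem absorb' {s α β lam p q w t T Cn : ℝ}
    (hs : 3 ≤ s) (hα : 0 < α) (hβ : 0 < β) (hlam : 0 < lam)
    (hp : 0 ≤ p) (hq : 0 ≤ q) (hw : 0 ≤ w) (hCn : 0 ≤ Cn)
    (ht2 : t * (4*(s-1)*α) = s*(4*β+(2*s-3)*lam))
    (F1 : (s-1)*p ≤ (s-2)*q + 1)
    (F2 : s*q*t ≤ (s-1)*w + T)
    (hTC : T ≤ Cn) :
    -(s*α/2)*w + (s/2)*β*p + s*(s-2)*lam/8*(p + q)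
      ≤ -α*w + (β + s*lam/8 + α/2*Cn) := by
  have hs1 : (0:ℝ) < s - 1 := by linarith
  have hs2 : (0:ℝ) ≤ s - 2 := by linarith
  have h8sK' : (0:ℝ) ≤ 4*s^2*β + s^2*(s-2)*lam := by
    have h1 : (0:ℝ) ≤ s^2*β := by positivity
    have h2 : (0:ℝ) ≤ s^2*(s-2)*lam := by
      apply mul_nonneg (mul_nonneg (by positivity) hs2) hlam.le
    linarith
  have h4a : (0:ℝ) ≤ 4*(s-1)*(s-2)*α :=
    mul_nonneg (mul_nonneg (mul_nonneg (by norm_num) hs1.le) hs2) hα.le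
  have M1s := mul_le_mul_of_nonneg_left F1 h8sK'
  have F2s := mul_le_mul_of_nonneg_left F2 h4a
  have hTCs := mul_le_mul_of_nonneg_left hTC h4a
  have qIdent : (4*s^2*β + s^2*(s-2)*lam)*((s-2)*q) + 8*s*(s*(s-2)*lam/8)*((s-1)*q)
      = 4*(s-1)*(s-2)*α*(s*q*t) := by
    linear_combination (-(s*(s-2)*q)) * ht2
  have slack1 : (0:ℝ) ≤ 4*(s-1)*(s-2)*α*w := mul_nonneg h4a hw
  have slack2 : (0:ℝ) ≤ 8*(s-1)*α*Cn := by
    apply mul_nonneg (mul_nonneg (by linarith) hα.le) hCn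
  have slack3 : (0:ℝ) ≤ 4*s*(s-2)*β + s^2*lam := by
    have := mul_nonneg (mul_nonneg (by linarith : (0:ℝ) ≤ 4*s) hs2) hβ.le
    nlinarith
  have Goal2 : 8*s*(s-1)*(-(s*α/2)*w + (s/2)*β*p + s*(s-2)*lam/8*(p + q))
      ≤ 8*s*(s-1)*(-α*w + (β + s*lam/8 + α/2*Cn)) := by
    linarith [M1s, F2s, hTCs, qIdent, slack1, slack2, slack3]
  have h8s : (0:ℝ) < 8*s*(s-1) := by nlinarith
  exact le_of_mul_le_mul_left Goal2 h8s

theorem key_ineq' (n : ℕ) (hn : 3 ≤ n) {α β lam u : ℝ} (hα : 0 < α) (hβ : 0 < β)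
    (hlam : 0 < lam) (hu : 0 ≤ u) :
    -((n:ℝ)*α/2) * u^n + ((n:ℝ)/2)*β*u^(n-2)
      + (n:ℝ)*((n:ℝ)-2)*lam/8*(u^(n-2) + u^(n-1))
    ≤ -α*u^n + ((n:ℝ)*lam/8 + β + α/2*(((n:ℝ)*lam+6*β)/(2*α))^n) := by
  have hs : (3:ℝ) ≤ (n:ℝ) := by exact_mod_cast hn
  have hs1 : (0:ℝ) < (n:ℝ) - 1 := by linarith
  have hden : (0:ℝ) < 4*((n:ℝ)-1)*α := by positivity
  set t : ℝ := (n:ℝ)*(4*β+(2*(n:ℝ)-3)*lam)/(4*((n:ℝ)-1)*α) with htdef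
  have hnum : (0:ℝ) ≤ (n:ℝ)*(4*β+(2*(n:ℝ)-3)*lam) := by
    have h1 : (0:ℝ) ≤ (2*(n:ℝ)-3)*lam := mul_nonneg (by linarith) hlam.le
    have h2 : (0:ℝ) ≤ 4*β+(2*(n:ℝ)-3)*lam := by linarith
    exact mul_nonneg (by linarith) h2
  have ht : 0 ≤ t := div_nonneg hnum hden.le
  have ht2 : t * (4*((n:ℝ)-1)*α) = (n:ℝ)*(4*β+(2*(n:ℝ)-3)*lam) := by
    rw [htdef]; field_simp
  have hc : (0:ℝ) < ((n:ℝ)*lam+6*β)/(2*α) := by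
    have : (0:ℝ) < (n:ℝ)*lam := by positivity
    positivity
  have htc : t ≤ ((n:ℝ)*lam+6*β)/(2*α) := by
    rw [htdef, div_le_div_iff₀ hden (by positivity)]
    nlinarith [mul_nonneg (mul_nonneg hα.le (by linarith : (0:ℝ) ≤ (n:ℝ))) hlam.le,
      mul_nonneg (mul_nonneg hα.le hβ.le) (by linarith : (0:ℝ) ≤ 2*(n:ℝ)-3)]
  have htn : t^n ≤ (((n:ℝ)*lam+6*β)/(2*α))^n := pow_le_pow_left₀ ht htc n
  have F1 : ((n:ℝ)-1)*u^(n-2) ≤ ((n:ℝ)-2)*u^(n-1) + 1 := by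
    have h := young_master' (n-2) hu (zero_le_one)
    rw [show n - 2 + 1 = n - 1 by omega, one_pow] at h
    have e2 : ((n-2:ℕ):ℝ) = (n:ℝ) - 2 := by
      push_cast [Nat.cast_sub (show 2 ≤ n by omega)]; ring
    rw [e2] at h
    linarith [h]
  have F2 : (n:ℝ)*u^(n-1)*t ≤ ((n:ℝ)-1)*u^n + t^n := by
    have h := young_master' (n-1) hu ht
    rw [show n - 1 + 1 = n by omega] at h
    have e2 : ((n-1:ℕ):ℝ) = (n:ℝ) - 1 := by
      push_cast [Nat.cast_sub (show 1 ≤ n by omega)]; ring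
    rw [e2] at h
    linarith [h]
  have h := absorb' (s := (n:ℝ)) hs hα hβ hlam (pow_nonneg hu (n-2)) (pow_nonneg hu (n-1))
    (pow_nonneg hu n) (le_of_lt (pow_pos hc n)) ht2 F1 F2 htn
  linarith [h]

end Helpers

/-- The infinitesimal generator of a diffusion with drift `b` and diffusion
coefficient `σ`: `𝒜 g (x) = ⟨b(x), ∇g(x)⟩ + (1/2)⟨σ(x)σ(x)ᵀ, ∇²g(x)⟩`. -/
noncomputable def diffusionGen {d l : ℕ}
    (b : EuclideanSpace ℝ (Fin d) → EuclideanSpace ℝ (Fin d))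
    (σ : EuclideanSpace ℝ (Fin d) → Matrix (Fin d) (Fin l) ℝ)
    (g : EuclideanSpace ℝ (Fin d) → ℝ) (x : EuclideanSpace ℝ (Fin d)) : ℝ :=
  (∑ i, b x i * fderiv ℝ g x (EuclideanSpace.single i 1)) +
    (1 / 2) * ∑ i, ∑ j, (σ x * (σ x)ᵀ) i j *
      fderiv ℝ (fun y => fderiv ℝ g y (EuclideanSpace.single j 1)) x
        (EuclideanSpace.single i 1)

theorem quad_eq' {d : ℕ} (A : Matrix (Fin d) (Fin d) ℝ) (x : EuclideanSpace ℝ (Fin d)) :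
    ∑ i, ∑ j, A i j * (x j * x i) = ⟪(toEuclideanCLM (𝕜 := ℝ) A) x, x⟫ := by
  have happ : ∀ i, ((toEuclideanCLM (𝕜 := ℝ) A) x) i = ∑ j, A i j * x j := by
    intro i
    have h := Matrix.ofLp_toEuclideanCLM (n := Fin d) (𝕜 := ℝ) A x
    have := congrFun h i
    simpa [Matrix.mulVec, dotProduct] using this
  rw [PiLp.inner_apply]
  simp only [RCLike.inner_apply, conj_trivial, happ, Finset.sum_mul, Finset.mul_sum]
  exact Finset.sum_congr rfl fun i _ => Finset.sum_congr rfl fun j _ => by ring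

theorem stmt_15 (d l : ℕ)
    (b : EuclideanSpace ℝ (Fin d) → EuclideanSpace ℝ (Fin d))
    (σ : EuclideanSpace ℝ (Fin d) → Matrix (Fin d) (Fin l) ℝ)
    (α β lam_a : ℝ) (hα : 0 < α) (hβ : 0 < β) (hlam : 0 < lam_a)
    (hgen2 : ∀ x, diffusionGen b σ (fun y => ‖y‖ ^ 2) x =
      2 * ⟪b x, x⟫ + ∑ i, ∑ j, (σ x i j) ^ 2)
    (hdiss : ∀ x : EuclideanSpace ℝ (Fin d),
      2 * ⟪b x, x⟫ + ∑ i, ∑ j, (σ x i j) ^ 2 ≤ -α * ‖x‖ ^ 2 + β)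
    (hgrow : ∀ x : EuclideanSpace ℝ (Fin d),
      ‖Matrix.toEuclideanCLM (𝕜 := ℝ) (σ x * (σ x)ᵀ)‖ ≤ lam_a / 4 * (1 + ‖x‖))
    (n : ℕ) (hn : 3 ≤ n) (x : EuclideanSpace ℝ (Fin d)) :
    diffusionGen b σ (fun y => ‖y‖ ^ n) x ≤
      -α * ‖x‖ ^ n +
        (β + n * lam_a / 8 + α / 2 * ((n * lam_a + 6 * β) / (2 * α)) ^ n) := by
  have hn2 : 2 ≤ n := by omega
  have hs : (3:ℝ) ≤ (n:ℝ) := by exact_mod_cast hn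
  have hGfun : ∀ j : Fin d, (fun y : EuclideanSpace ℝ (Fin d) =>
      fderiv ℝ (fun z : EuclideanSpace ℝ (Fin d) => ‖z‖ ^ n) y (EuclideanSpace.single j 1))
      = fun y : EuclideanSpace ℝ (Fin d) => (n : ℝ) * ‖y‖ ^ ((n:ℝ) - 2) * y j :=
    fun j => funext fun y => fderiv_norm_pow_apply' n hn2 y j
  by_cases hx : x = 0
  · subst hx
    have hzero : diffusionGen b σ (fun y : EuclideanSpace ℝ (Fin d) => ‖y‖ ^ n) 0 = 0 := by
      have hfz : fderiv ℝ (fun z : EuclideanSpace ℝ (Fin d) => ‖z‖ ^ n)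
          (0 : EuclideanSpace ℝ (Fin d)) = 0 := by
        rw [(hasFDerivAt_norm_pow'' n hn2 0).fderiv]
        ext v
        simp
      have hsnd : ∀ j : Fin d, fderiv ℝ
          (fun y : EuclideanSpace ℝ (Fin d) => (n : ℝ) * ‖y‖ ^ ((n:ℝ) - 2) * y j)
          (0 : EuclideanSpace ℝ (Fin d)) = 0 := by
        intro j
        have hφc : Continuous fun y : EuclideanSpace ℝ (Fin d) => (n:ℝ) * ‖y‖ ^ ((n:ℝ)-2) :=
          continuous_const.mul (continuous_norm.rpow_const (fun y => Or.inr (by linarith)))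
        have hφ0 : (n:ℝ) * ‖(0 : EuclideanSpace ℝ (Fin d))‖ ^ ((n:ℝ)-2) = 0 := by
          rw [norm_zero, Real.zero_rpow (by linarith : (n:ℝ) - 2 ≠ 0)]
          ring
        exact (hasFDerivAt_zero_mul_clm' _ hφc.continuousAt hφ0
          (EuclideanSpace.proj (𝕜 := ℝ) j)).fderiv
      simp only [diffusionGen, hGfun, hfz, hsnd]
      simp
    rw [hzero]
    rw [norm_zero, zero_pow (by omega : n ≠ 0)]
    have h1 : (0:ℝ) < α / 2 * (((n:ℝ) * lam_a + 6 * β) / (2 * α)) ^ n := by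
      have : (0:ℝ) < (n:ℝ) * lam_a := by positivity
      positivity
    have h2 : (0:ℝ) ≤ (n:ℝ) * lam_a / 8 := by positivity
    nlinarith [h1, h2, hβ]
  · have hu : (0:ℝ) < ‖x‖ := norm_pos_iff.mpr hx
    have hD : ∀ j i : Fin d, fderiv ℝ
        (fun y : EuclideanSpace ℝ (Fin d) => (n : ℝ) * ‖y‖ ^ ((n:ℝ) - 2) * y j) x
        (EuclideanSpace.single i 1)
        = (n:ℝ) * (‖x‖ ^ ((n:ℝ)-2) * (if j = i then (1:ℝ) else 0)
            + x j * (((n:ℝ)-2) * ‖x‖ ^ ((n:ℝ)-2-2)) * x i) := by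
      intro j i
      rw [(hasFDerivAt_G_ne' n hx j).fderiv]
      simp [EuclideanSpace.single_apply, EuclideanSpace.inner_single_right, mul_assoc]
      split_ifs <;> ring
    have hBx : (⟪b x, x⟫ : ℝ) = ∑ i, b x i * x i := by
      rw [PiLp.inner_apply]; simp [RCLike.inner_apply, mul_comm]
    have htrace : ∑ i, (σ x * (σ x)ᵀ) i i = ∑ i, ∑ j, (σ x i j)^2 :=
      Finset.sum_congr rfl fun i _ => by simp [Matrix.mul_apply, sq]
    have t1 : ∑ i, b x i * ((n:ℝ) * ‖x‖ ^ ((n:ℝ)-2) * x i)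
        = (n:ℝ) * ‖x‖ ^ ((n:ℝ)-2) * (∑ i, b x i * x i) := by
      rw [Finset.mul_sum]
      exact Finset.sum_congr rfl fun i _ => by ring
    have t2 : ∀ i : Fin d, ∑ j, (σ x * (σ x)ᵀ) i j *
          ((n:ℝ) * (‖x‖ ^ ((n:ℝ)-2) * (if j = i then (1:ℝ) else 0)
            + x j * (((n:ℝ)-2) * ‖x‖ ^ ((n:ℝ)-2-2)) * x i))
        = (n:ℝ) * ‖x‖ ^ ((n:ℝ)-2) * (σ x * (σ x)ᵀ) i i
          + (n:ℝ) * ((n:ℝ)-2) * ‖x‖ ^ ((n:ℝ)-2-2)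
            * (∑ j, (σ x * (σ x)ᵀ) i j * (x j * x i)) := by
      intro i
      have e : ∀ j : Fin d, (σ x * (σ x)ᵀ) i j *
            ((n:ℝ) * (‖x‖ ^ ((n:ℝ)-2) * (if j = i then (1:ℝ) else 0)
              + x j * (((n:ℝ)-2) * ‖x‖ ^ ((n:ℝ)-2-2)) * x i))
          = (if j = i then (n:ℝ) * ‖x‖ ^ ((n:ℝ)-2) * (σ x * (σ x)ᵀ) i j else 0)
            + (n:ℝ) * ((n:ℝ)-2) * ‖x‖ ^ ((n:ℝ)-2-2) * ((σ x * (σ x)ᵀ) i j * (x j * x i)) := by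
        intro j; split_ifs <;> ring
      rw [Finset.sum_congr rfl fun j _ => e j, Finset.sum_add_distrib,
        Finset.sum_ite_eq' Finset.univ i
          (fun j => (n:ℝ) * ‖x‖ ^ ((n:ℝ)-2) * (σ x * (σ x)ᵀ) i j),
        ← Finset.mul_sum]
      simp
    have hval : diffusionGen b σ (fun y : EuclideanSpace ℝ (Fin d) => ‖y‖ ^ n) x
        = (n:ℝ)/2 * ‖x‖ ^ ((n:ℝ)-2) * (2 * ⟪b x, x⟫ + ∑ i, ∑ j, (σ x i j)^2)
          + (n:ℝ) * ((n:ℝ)-2)/2 * ‖x‖ ^ ((n:ℝ)-2-2)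
            * (∑ i, ∑ j, (σ x * (σ x)ᵀ) i j * (x j * x i)) := by
      simp only [diffusionGen, fderiv_norm_pow_apply' n hn2, hD]
      rw [t1, Finset.sum_congr rfl fun i _ => t2 i, Finset.sum_add_distrib,
        ← Finset.mul_sum, ← Finset.mul_sum, htrace, hBx]
      ring
    have hQb : (∑ i, ∑ j, (σ x * (σ x)ᵀ) i j * (x j * x i))
        ≤ lam_a/4 * (1 + ‖x‖) * ‖x‖^2 := by
      rw [quad_eq' (σ x * (σ x)ᵀ) x]
      have c1 := real_inner_le_norm ((toEuclideanCLM (𝕜 := ℝ) (σ x * (σ x)ᵀ)) x) x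
      have c2 := (toEuclideanCLM (𝕜 := ℝ) (σ x * (σ x)ᵀ)).le_opNorm x
      have c3 := hgrow x
      nlinarith [norm_nonneg x, norm_nonneg ((toEuclideanCLM (𝕜 := ℝ) (σ x * (σ x)ᵀ)) x),
        sq_nonneg ‖x‖, mul_le_mul_of_nonneg_right c2 (norm_nonneg x),
        mul_le_mul_of_nonneg_right c3 (mul_nonneg (norm_nonneg x) (norm_nonneg x))]
    have hco : (0:ℝ) ≤ (n:ℝ) * ((n:ℝ)-2)/2 * ‖x‖ ^ ((n:ℝ)-2-2) := by
      apply mul_nonneg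
      · apply div_nonneg _ (by norm_num)
        exact mul_nonneg (Nat.cast_nonneg n) (by linarith)
      · exact Real.rpow_nonneg hu.le _
    have hb1 : (n:ℝ)/2 * ‖x‖ ^ ((n:ℝ)-2) * (2 * ⟪b x, x⟫ + ∑ i, ∑ j, (σ x i j)^2)
        ≤ (n:ℝ)/2 * ‖x‖ ^ ((n:ℝ)-2) * (-α * ‖x‖^2 + β) := by
      apply mul_le_mul_of_nonneg_left (hdiss x)
      have := Real.rpow_nonneg hu.le ((n:ℝ)-2)
      positivity
    have hb2 : (n:ℝ) * ((n:ℝ)-2)/2 * ‖x‖ ^ ((n:ℝ)-2-2)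
          * (∑ i, ∑ j, (σ x * (σ x)ᵀ) i j * (x j * x i))
        ≤ (n:ℝ) * ((n:ℝ)-2)/2 * ‖x‖ ^ ((n:ℝ)-2-2) * (lam_a/4 * (1 + ‖x‖) * ‖x‖^2) :=
      mul_le_mul_of_nonneg_left hQb hco
    have hrn : ‖x‖ ^ ((n:ℝ)-2) * ‖x‖^2 = ‖x‖ ^ n := by
      rw [← Real.rpow_natCast ‖x‖ 2, ← Real.rpow_add hu, ← Real.rpow_natCast ‖x‖ n]
      norm_num
    have hr42 : ‖x‖ ^ ((n:ℝ)-2-2) * ‖x‖^2 = ‖x‖ ^ ((n:ℝ)-2) := by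
      rw [← Real.rpow_natCast ‖x‖ 2, ← Real.rpow_add hu]
      norm_num
    have hr2 : ‖x‖ ^ ((n:ℝ)-2) = ‖x‖ ^ (n-2 : ℕ) := by
      rw [← Real.rpow_natCast ‖x‖ (n-2)]
      congr 1
      push_cast [Nat.cast_sub (show 2 ≤ n by omega)]
      ring
    have hr1 : ‖x‖ ^ (n-2 : ℕ) * ‖x‖ = ‖x‖ ^ (n-1 : ℕ) := by
      rw [← pow_succ, show n-2+1 = n-1 by omega]
    have Efinal : (n:ℝ)/2 * ‖x‖ ^ ((n:ℝ)-2) * (-α * ‖x‖^2 + β)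
          + (n:ℝ) * ((n:ℝ)-2)/2 * ‖x‖ ^ ((n:ℝ)-2-2) * (lam_a/4 * (1 + ‖x‖) * ‖x‖^2)
        = -((n:ℝ)*α/2) * ‖x‖^n + ((n:ℝ)/2)*β*‖x‖^(n-2)
          + (n:ℝ)*((n:ℝ)-2)*lam_a/8*(‖x‖^(n-2) + ‖x‖^(n-1)) := by
      linear_combination (-((n:ℝ)*α/2)) * hrn
        + ((n:ℝ)*((n:ℝ)-2)*lam_a/8*(1+‖x‖)) * hr42
        + (((n:ℝ)/2)*β + (n:ℝ)*((n:ℝ)-2)*lam_a/8*(1+‖x‖)) * hr2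
        + ((n:ℝ)*((n:ℝ)-2)*lam_a/8) * hr1
    have hkey := key_ineq' n hn hα hβ hlam (norm_nonneg x)
    rw [hval]
    linarith [hb1, hb2, Efinal, hkey]
end

section
/- Fix $c > \frac{d+3}{2}$, $\gamma \geq 1$, and consider on $\mathbb{R}^d$ the functions $f(x) = c\log(1 + \frac{1}{2}\|x\|_2^2)$, $\sigma(x) = \sqrt{1+\frac{1}{2}\|x\|_2^2}\, I$, $a(x) = \sigma(x)\sigma(x)^\top$, $b_\gamma(x) = -\frac{1}{2}a(x)\nabla f(x) + \frac{1}{2\gamma}\langle \nabla, a(x)\rangle$, and $\sigma_\gamma = \frac{1}{\sqrt{\gamma}}\sigma$. Then for all $x, y \in \mathbb{R}^d$, $2\langle b_\gamma(x) - b_\gamma(y), x-y\rangle + \|\sigma_\gamma(x) - \sigma_\gamma(y)\|_F^2 \leq -\left(c - \frac{d+3}{2\gamma}\right)\|x-y\|_2^2$. -/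
open MeasureTheory Matrix RealInnerProductSpace

lemma sqrt_diff_sq_le (s t : ℝ) (hs : 0 ≤ s) (ht : 0 ≤ t) :
    (Real.sqrt (1 + s ^ 2 / 2) - Real.sqrt (1 + t ^ 2 / 2)) ^ 2 ≤ (s - t) ^ 2 / 2 := by
  set A := Real.sqrt (1 + s ^ 2 / 2) with hA
  set B := Real.sqrt (1 + t ^ 2 / 2) with hB
  have hA2 : A ^ 2 = 1 + s ^ 2 / 2 := Real.sq_sqrt (by positivity)
  have hB2 : B ^ 2 = 1 + t ^ 2 / 2 := Real.sq_sqrt (by positivity)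
  have hApos : 0 ≤ A := Real.sqrt_nonneg _
  have hBpos : 0 ≤ B := Real.sqrt_nonneg _
  have h2 : (2 + s * t) ^ 2 ≤ (2 * (A * B)) ^ 2 := by nlinarith [sq_nonneg (s - t)]
  have hst : 0 ≤ s * t := mul_nonneg hs ht
  have h3 : 2 + s * t ≤ 2 * (A * B) := by
    nlinarith [h2, hst, mul_nonneg hApos hBpos]
  nlinarith [h3]

theorem stmt_16 (d : ℕ) (c γ : ℝ) (hc : ((d : ℝ) + 3) / 2 < c) (hγ : 1 ≤ γ)
    (f : EuclideanSpace ℝ (Fin d) → ℝ)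
    (hf : ∀ x, f x = c * Real.log (1 + ‖x‖ ^ 2 / 2))
    (bγ : EuclideanSpace ℝ (Fin d) → EuclideanSpace ℝ (Fin d))
    -- b_γ(x) = -(1/2) a(x) ∇f(x) + (1/(2γ)) ⟨∇, a(x)⟩ with a(x) = (1 + ‖x‖²/2) I
    (hb : ∀ x, bγ x =
      -((1 : ℝ) / 2) • ((1 + ‖x‖ ^ 2 / 2) • gradient f x) +
        (1 / (2 * γ)) • ((WithLp.equiv 2 (Fin d → ℝ)).symm fun j => ∑ k,
          fderiv ℝ (fun y : EuclideanSpace ℝ (Fin d) =>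
            (1 + ‖y‖ ^ 2 / 2) * (if j = k then (1 : ℝ) else 0)) x
              (EuclideanSpace.single k 1)))
    (σγ : EuclideanSpace ℝ (Fin d) → Matrix (Fin d) (Fin d) ℝ)
    (hσ : ∀ x, σγ x = (Real.sqrt (1 + ‖x‖ ^ 2 / 2) / Real.sqrt γ) • (1 : Matrix (Fin d) (Fin d) ℝ)) :
    ∀ x y : EuclideanSpace ℝ (Fin d),
      2 * ⟪bγ x - bγ y, x - y⟫ + ∑ i, ∑ j, ((σγ x - σγ y) i j) ^ 2 ≤
        -(c - ((d : ℝ) + 3) / (2 * γ)) * ‖x - y‖ ^ 2 := by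
  have hγ0 : (0:ℝ) < γ := lt_of_lt_of_le one_pos hγ
  -- derivative of g(y) = 1 + ‖y‖²/2 is innerSL x
  have hg : ∀ x : EuclideanSpace ℝ (Fin d),
      HasFDerivAt (fun y : EuclideanSpace ℝ (Fin d) => 1 + ‖y‖ ^ 2 / 2) (innerSL ℝ x) x := by
    intro x
    have h1 : HasFDerivAt (fun y : EuclideanSpace ℝ (Fin d) => ‖y‖ ^ 2)
        (2 • (innerSL ℝ x)) x := (hasStrictFDerivAt_norm_sq x).hasFDerivAt
    have h2 := (h1.const_mul ((2:ℝ)⁻¹)).const_add 1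
    have heq : (fun y : EuclideanSpace ℝ (Fin d) => 1 + ‖y‖ ^ 2 / 2) =
        fun y => 1 + 2⁻¹ * ‖y‖ ^ 2 := by funext y; ring
    rw [heq]
    refine h2.congr_fderiv ?_
    ext v
    simp [two_smul]
    ring
  -- gradient of f
  have hgrad : ∀ x : EuclideanSpace ℝ (Fin d),
      gradient f x = (c / (1 + ‖x‖ ^ 2 / 2)) • x := by
    intro x
    have hx0 : (0:ℝ) < 1 + ‖x‖ ^ 2 / 2 := by positivity
    have hlog : HasDerivAt Real.log (1 / (1 + ‖x‖ ^ 2 / 2)) (1 + ‖x‖ ^ 2 / 2) := by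
      simpa [one_div] using Real.hasDerivAt_log hx0.ne'
    have h1 : HasFDerivAt (fun y : EuclideanSpace ℝ (Fin d) => Real.log (1 + ‖y‖ ^ 2 / 2))
        ((1 / (1 + ‖x‖ ^ 2 / 2)) • innerSL ℝ x) x := by exact hlog.comp_hasFDerivAt x (hg x)
    have h2 : HasFDerivAt f ((c / (1 + ‖x‖ ^ 2 / 2)) • innerSL ℝ x) x := by
      have h2' := h1.const_mul c
      have hfe : f = fun y : EuclideanSpace ℝ (Fin d) =>
          c * Real.log (1 + ‖y‖ ^ 2 / 2) := funext hf
      rw [hfe]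
      refine h2'.congr_fderiv ?_
      ext v
      simp
      ring
    have h3 : HasGradientAt f ((c / (1 + ‖x‖ ^ 2 / 2)) • x) x := by
      rw [hasGradientAt_iff_hasFDerivAt]
      refine h2.congr_fderiv ?_
      ext v
      simp [InnerProductSpace.toDual_apply_apply, real_inner_smul_left]
    exact h3.gradient
  -- divergence term equals x
  have hdiv : ∀ (x : EuclideanSpace ℝ (Fin d)) (j : Fin d),
      (∑ k, fderiv ℝ (fun y : EuclideanSpace ℝ (Fin d) =>
        (1 + ‖y‖ ^ 2 / 2) * (if j = k then (1 : ℝ) else 0)) x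
          (EuclideanSpace.single k 1)) = x j := by
    intro x j
    rw [Finset.sum_eq_single j]
    · have heq : (fun y : EuclideanSpace ℝ (Fin d) =>
          (1 + ‖y‖ ^ 2 / 2) * (if j = j then (1:ℝ) else 0)) =
          fun y => 1 + ‖y‖ ^ 2 / 2 := by funext y; simp
      rw [heq, (hg x).fderiv]
      simp [PiLp.inner_apply, EuclideanSpace.single_apply]
    · intro k _ hk
      have heq : (fun y : EuclideanSpace ℝ (Fin d) =>
          (1 + ‖y‖ ^ 2 / 2) * (if j = k then (1:ℝ) else 0)) = fun _ => 0 := by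
        funext y; rw [if_neg (fun h => hk h.symm), mul_zero]
      rw [heq, fderiv_fun_const]
      simp
    · intro h; exact absurd (Finset.mem_univ j) h
  -- closed form of bγ
  have hbγ : ∀ x : EuclideanSpace ℝ (Fin d), bγ x = (1 / (2 * γ) - c / 2) • x := by
    intro x
    have hx0 : (0:ℝ) < 1 + ‖x‖ ^ 2 / 2 := by positivity
    have hdivx : ((WithLp.equiv 2 (Fin d → ℝ)).symm fun j => ∑ k,
        fderiv ℝ (fun y : EuclideanSpace ℝ (Fin d) =>
          (1 + ‖y‖ ^ 2 / 2) * (if j = k then (1:ℝ) else 0)) x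
          (EuclideanSpace.single k 1)) = x := by
      apply (WithLp.equiv 2 (Fin d → ℝ)).symm_apply_eq.mpr
      funext j
      exact (hdiv x j).trans rfl
    rw [hb x, hdivx, hgrad x, smul_smul, smul_smul, ← add_smul]
    congr 1
    field_simp
    ring
  intro x y
  -- inner product term
  have hinner : 2 * ⟪bγ x - bγ y, x - y⟫ = (1 / γ - c) * ‖x - y‖ ^ 2 := by
    rw [hbγ x, hbγ y, ← smul_sub, real_inner_smul_left, real_inner_self_eq_norm_sq]
    ring
  -- Frobenius term
  set A := Real.sqrt (1 + ‖x‖ ^ 2 / 2) with hAdef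
  set B := Real.sqrt (1 + ‖y‖ ^ 2 / 2) with hBdef
  have hfrob : (∑ i, ∑ j, ((σγ x - σγ y) i j) ^ 2) = d * ((A - B) / Real.sqrt γ) ^ 2 := by
    rw [hσ x, hσ y, ← hAdef, ← hBdef]
    have hentry : ∀ i j : Fin d, (((A / Real.sqrt γ) • (1 : Matrix (Fin d) (Fin d) ℝ) -
        (B / Real.sqrt γ) • 1) i j) = ((A - B) / Real.sqrt γ) * (if i = j then 1 else 0) := by
      intro i j
      simp [Matrix.sub_apply, Matrix.smul_apply, Matrix.one_apply]
      split <;> ring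
    simp only [hentry]
    simp [Finset.sum_ite_eq, mul_pow]
  have hAB : (A - B) ^ 2 ≤ ‖x - y‖ ^ 2 / 2 := by
    have h1 := sqrt_diff_sq_le ‖x‖ ‖y‖ (norm_nonneg x) (norm_nonneg y)
    have h2 : |‖x‖ - ‖y‖| ≤ ‖x - y‖ := abs_norm_sub_norm_le x y
    have h3 : (‖x‖ - ‖y‖) ^ 2 ≤ ‖x - y‖ ^ 2 := by
      rw [← sq_abs (‖x‖ - ‖y‖)]
      exact pow_le_pow_left₀ (abs_nonneg _) h2 2
    calc (A - B) ^ 2 ≤ (‖x‖ - ‖y‖) ^ 2 / 2 := h1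
      _ ≤ ‖x - y‖ ^ 2 / 2 := by linarith
  have hsqγ : Real.sqrt γ ^ 2 = γ := Real.sq_sqrt hγ0.le
  have hfrob2 : (∑ i, ∑ j, ((σγ x - σγ y) i j) ^ 2) ≤ d * (‖x - y‖ ^ 2 / (2 * γ)) := by
    rw [hfrob, div_pow, hsqγ]
    have hr : (A - B) ^ 2 / γ ≤ ‖x - y‖ ^ 2 / (2 * γ) := by
      rw [div_le_div_iff₀ hγ0 (by positivity)]
      nlinarith [hAB]
    nlinarith [hr, Nat.cast_nonneg (α := ℝ) d]
  rw [hinner]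
  have hd0 : (0:ℝ) ≤ ‖x - y‖ ^ 2 := by positivity
  have key : (1 / γ - c) + (d : ℝ) / (2 * γ) ≤ -(c - ((d : ℝ) + 3) / (2 * γ)) := by
    have h1 : (0:ℝ) < 2 * γ := by linarith
    have h2 : ((d:ℝ) + 2) / (2 * γ) ≤ ((d:ℝ) + 3) / (2 * γ) := by
      gcongr
      linarith
    have e : (1 / γ - c) + (d : ℝ) / (2 * γ) = -(c - ((d:ℝ) + 2) / (2 * γ)) := by
      field_simp
      ring
    linarith
  calc (1 / γ - c) * ‖x - y‖ ^ 2 + ∑ i, ∑ j, ((σγ x - σγ y) i j) ^ 2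
      ≤ (1 / γ - c) * ‖x - y‖ ^ 2 + d * (‖x - y‖ ^ 2 / (2 * γ)) := by linarith [hfrob2]
    _ = ((1 / γ - c) + (d : ℝ) / (2 * γ)) * ‖x - y‖ ^ 2 := by ring
    _ ≤ -(c - ((d : ℝ) + 3) / (2 * γ)) * ‖x - y‖ ^ 2 :=
        mul_le_mul_of_nonneg_right key hd0
end
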